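/- Let n ≥ 1, let γ ∈ ℝ with γ ≠ 1, let ρ, μ : ℝⁿ → ℝ be smooth with ρ(x) > 0 and μ(x) > 0 for all x, and let Φ : ℝⁿ → ℝ be smooth. Then for every x ∈ ℝⁿ: μ(x)^{γ−1}·ρ(x)^{−γ}·∇·(ρ^γ ∇Φ)(x) − γ·ρ(x)^{γ−1}·⟨ ∇( (1/(1−γ))·(ρ/μ)^{1−γ} )(x), ∇Φ(x) ⟩ = μ(x)^{γ−1}·ΔΦ(x) + γ·μ(x)^{γ−2}·⟨∇μ(x), ∇Φ(x)⟩. -/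

import Mathlib

open MeasureTheory Filter Set
open scoped InnerProductSpace Topology

/-- Partial derivative `∂ⱼ f x` on Euclidean space. -/
noncomputable def pder (n : ℕ) (j : Fin n) (f : EuclideanSpace ℝ (Fin n) → ℝ)
    (x : EuclideanSpace ℝ (Fin n)) : ℝ :=
  fderiv ℝ f x (EuclideanSpace.single j 1)

/-- Divergence `∇·v` of a vector field on Euclidean space. -/
noncomputable def divg (n : ℕ) (v : EuclideanSpace ℝ (Fin n) → EuclideanSpace ℝ (Fin n))
    (x : EuclideanSpace ℝ (Fin n)) : ℝ :=
  ∑ j, pder n j (fun y => v y j) x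

/-- Laplacian `Δf = ∑ⱼ ∂ⱼ∂ⱼ f`. -/
noncomputable def lapl (n : ℕ) (f : EuclideanSpace ℝ (Fin n) → ℝ)
    (x : EuclideanSpace ℝ (Fin n)) : ℝ :=
  ∑ j, pder n j (fun y => pder n j f y) x

/-- Entry `(i,j)` of the Hessian matrix of `f`. -/
noncomputable def hessij (n : ℕ) (f : EuclideanSpace ℝ (Fin n) → ℝ)
    (x : EuclideanSpace ℝ (Fin n)) (i j : Fin n) : ℝ :=
  pder n i (fun y => pder n j f y) x

/-- Hessian quadratic form `Hess f (u,u) = ∑ᵢⱼ (∂ᵢ∂ⱼf) uᵢ uⱼ`. -/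
noncomputable def hessQF (n : ℕ) (f : EuclideanSpace ℝ (Fin n) → ℝ)
    (x u : EuclideanSpace ℝ (Fin n)) : ℝ :=
  ∑ i, ∑ j, hessij n f x i j * u i * u j

/-- Squared Frobenius norm of the Hessian: `‖Hess f‖² = ∑ᵢⱼ (∂ᵢ∂ⱼf)²`. -/
noncomputable def hessFrob (n : ℕ) (f : EuclideanSpace ℝ (Fin n) → ℝ)
    (x : EuclideanSpace ℝ (Fin n)) : ℝ :=
  ∑ i, ∑ j, (hessij n f x i j)^2

lemma grad_inner {n : ℕ} (f : EuclideanSpace ℝ (Fin n) → ℝ) (x v : EuclideanSpace ℝ (Fin n)) :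
    ⟪gradient f x, v⟫_ℝ = fderiv ℝ f x v := by
  rw [gradient]; exact InnerProductSpace.toDual_symm_apply

lemma grad_coord {n : ℕ} (f : EuclideanSpace ℝ (Fin n) → ℝ) (x : EuclideanSpace ℝ (Fin n))
    (j : Fin n) : gradient f x j = pder n j f x := by
  have h := grad_inner f x (EuclideanSpace.single j 1)
  rw [EuclideanSpace.inner_single_right] at h
  simpa [pder] using h

lemma contDiff_pder {n : ℕ} {f : EuclideanSpace ℝ (Fin n) → ℝ}
    (hf : ContDiff ℝ (⊤ : ℕ∞) f) (j : Fin n) : ContDiff ℝ (⊤ : ℕ∞) (pder n j f) :=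
  (hf.fderiv_right (by exact_mod_cast le_top)).clm_apply contDiff_const

lemma inner_grad_grad {n : ℕ} (f g : EuclideanSpace ℝ (Fin n) → ℝ)
    (x : EuclideanSpace ℝ (Fin n)) :
    ⟪gradient f x, gradient g x⟫_ℝ = ∑ j, pder n j f x * pder n j g x := by
  rw [PiLp.inner_apply]
  refine Finset.sum_congr rfl fun j _ => ?_
  rw [RCLike.inner_apply, conj_trivial, grad_coord, grad_coord, mul_comm]

lemma divg_eq {n : ℕ} (γ : ℝ) {ρ Φ : EuclideanSpace ℝ (Fin n) → ℝ}
    (hρ : ContDiff ℝ (⊤ : ℕ∞) ρ) (hΦ : ContDiff ℝ (⊤ : ℕ∞) Φ)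
    (hρpos : ∀ x, 0 < ρ x) (x : EuclideanSpace ℝ (Fin n)) :
    divg n (fun y => (ρ y)^γ • gradient Φ y) x
      = γ * (ρ x)^(γ-1) * ⟪gradient ρ x, gradient Φ x⟫_ℝ + (ρ x)^γ * lapl n Φ x := by
  have key : ∀ j : Fin n, pder n j (fun y => ((ρ y)^γ • gradient Φ y) j) x
      = γ * (ρ x)^(γ-1) * (pder n j ρ x * pder n j Φ x)
        + (ρ x)^γ * pder n j (fun y => pder n j Φ y) x := by
    intro j
    have hcomp : (fun y => ((ρ y)^γ • gradient Φ y) j) = fun y => (ρ y)^γ * pder n j Φ y := by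
      funext y
      simp [grad_coord]
    have h1 : HasFDerivAt (fun y => (ρ y)^γ) ((γ * (ρ x)^(γ-1)) • fderiv ℝ ρ x) x :=
      ((hρ.differentiable (by simp) x).hasFDerivAt).rpow_const (Or.inl (hρpos x).ne')
    have h2 : HasFDerivAt (fun y => pder n j Φ y) (fderiv ℝ (fun y => pder n j Φ y) x) x :=
      (((contDiff_pder hΦ j).differentiable (by simp)) x).hasFDerivAt
    have h3 : HasFDerivAt (fun y => (ρ y)^γ * pder n j Φ y) _ x := h1.mul h2
    rw [pder, hcomp, h3.fderiv]
    simp only [ContinuousLinearMap.add_apply, ContinuousLinearMap.smul_apply, smul_eq_mul, pder]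
    ring
  rw [divg]
  simp only [key]
  rw [Finset.sum_add_distrib, ← Finset.mul_sum, ← Finset.mul_sum, lapl, inner_grad_grad]

lemma grad_g_eq {n : ℕ} (γ : ℝ) (hγ : γ ≠ 1) {ρ μ Φ : EuclideanSpace ℝ (Fin n) → ℝ}
    (hρ : ContDiff ℝ (⊤ : ℕ∞) ρ) (hμ : ContDiff ℝ (⊤ : ℕ∞) μ)
    (hρpos : ∀ x, 0 < ρ x) (hμpos : ∀ x, 0 < μ x) (x : EuclideanSpace ℝ (Fin n)) :
    ⟪gradient (fun y => (1/(1-γ)) * (ρ y / μ y)^(1-γ)) x, gradient Φ x⟫_ℝ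
      = (μ x)^(γ-1) * (ρ x)^(-γ) * ⟪gradient ρ x, gradient Φ x⟫_ℝ
        - (ρ x)^(1-γ) * (μ x)^(γ-2) * ⟪gradient μ x, gradient Φ x⟫_ℝ := by
  have h1γ : (1:ℝ) - γ ≠ 0 := sub_ne_zero_of_ne (Ne.symm hγ)
  have hfun : (fun y => (1/(1-γ)) * (ρ y / μ y)^(1-γ))
      = fun y => (1/(1-γ)) * ((ρ y)^(1-γ) * (μ y)^(γ-1)) := by
    funext y
    rw [Real.div_rpow (hρpos y).le (hμpos y).le, div_eq_mul_inv (ρ y ^ (1-γ)),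
      ← Real.rpow_neg (hμpos y).le, neg_sub]
  have h1 : HasFDerivAt (fun y => (ρ y)^(1-γ)) (((1-γ) * (ρ x)^(1-γ-1)) • fderiv ℝ ρ x) x :=
    ((hρ.differentiable (by simp) x).hasFDerivAt).rpow_const (Or.inl (hρpos x).ne')
  have h2 : HasFDerivAt (fun y => (μ y)^(γ-1)) (((γ-1) * (μ x)^(γ-1-1)) • fderiv ℝ μ x) x :=
    ((hμ.differentiable (by simp) x).hasFDerivAt).rpow_const (Or.inl (hμpos x).ne')
  have h3 : HasFDerivAt (fun y => (1/(1-γ)) * ((ρ y)^(1-γ) * (μ y)^(γ-1))) _ x :=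
    (h1.mul h2).const_mul (1/(1-γ))
  rw [grad_inner, hfun, h3.fderiv]
  have e1 : (1:ℝ) - γ - 1 = -γ := by ring
  have e2 : γ - 1 - 1 = γ - 2 := by ring
  rw [e1, e2]
  simp only [ContinuousLinearMap.add_apply, ContinuousLinearMap.smul_apply, smul_eq_mul,
    ← grad_inner]
  field_simp
  ring

theorem stmt13 (n : ℕ) (hn : 1 ≤ n) (γ : ℝ) (hγ : γ ≠ 1)
    (ρ μ : EuclideanSpace ℝ (Fin n) → ℝ)
    (hρ : ContDiff ℝ (⊤ : ℕ∞) ρ) (hμ : ContDiff ℝ (⊤ : ℕ∞) μ)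
    (hρpos : ∀ x, 0 < ρ x) (hμpos : ∀ x, 0 < μ x)
    (Φ : EuclideanSpace ℝ (Fin n) → ℝ) (hΦ : ContDiff ℝ (⊤ : ℕ∞) Φ) :
    ∀ x, (μ x)^(γ-1) * (ρ x)^(-γ) * divg n (fun y => (ρ y)^γ • gradient Φ y) x
        - γ * (ρ x)^(γ-1)
          * ⟪gradient (fun y => (1/(1-γ)) * (ρ y / μ y)^(1-γ)) x, gradient Φ x⟫_ℝ
      = (μ x)^(γ-1) * lapl n Φ x + γ * (μ x)^(γ-2) * ⟪gradient μ x, gradient Φ x⟫_ℝ := by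
  intro x
  rw [divg_eq γ hρ hΦ hρpos x, grad_g_eq γ hγ hρ hμ hρpos hμpos x]
  have hp := hρpos x
  have hm := hμpos x
  set p := ρ x
  set m := μ x
  set A := ⟪gradient ρ x, gradient Φ x⟫_ℝ
  set B := ⟪gradient μ x, gradient Φ x⟫_ℝ
  set L := lapl n Φ x
  have hpγ : (0:ℝ) < p ^ γ := Real.rpow_pos_of_pos hp γ
  have hmγ : (0:ℝ) < m ^ γ := Real.rpow_pos_of_pos hm γ
  have e1 : p ^ (γ-1) = p ^ γ / p := by rw [Real.rpow_sub hp, Real.rpow_one]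
  have e2 : p ^ (-γ) = (p ^ γ)⁻¹ := Real.rpow_neg hp.le γ
  have e3 : p ^ (1-γ) = p / p ^ γ := by rw [Real.rpow_sub hp, Real.rpow_one]
  have e4 : m ^ (γ-1) = m ^ γ / m := by rw [Real.rpow_sub hm, Real.rpow_one]
  have e5 : m ^ (γ-2) = m ^ γ / m ^ 2 := by rw [Real.rpow_sub hm, Real.rpow_two]
  rw [e1, e2, e3, e4, e5]
  field_simp
  ring
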